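/- Every idempotent ε of the semigroup 𝐈ℕ∞ is the unit of a subsemigroup of 𝐈ℕ∞ that is isomorphic to the bicyclic semigroup; explicitly, there exists γ ∈ 𝐈ℕ∞ with γγ⁻¹ = ε and γ⁻¹γ ≠ ε such that the subsemigroup generated by γ and γ⁻¹ is isomorphic to the bicyclic monoid with identity ε. -/

import Mathlib

/-- Partial transformations of the set ℕ of positive integers. -/
abbrev PMapN : Type := ℕ+ → Option ℕ+

/-- The domain of a partial transformation. -/
def pdom (f : PMapN) : Set ℕ+ := {n | f n ≠ none}

/-- The range of a partial transformation. -/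
def pran (f : PMapN) : Set ℕ+ := {m | ∃ n, f n = some m}

/-- Composition of partial transformations: `pmul f g` applies `g` first and then `f`. -/
def pmul (f g : PMapN) : PMapN := fun n => (g n).bind f

/-- The identity transformation 𝕀 of ℕ. -/
def pid : PMapN := fun n => some n

/-- `f` is a partial bijection (an injective partial map). -/
def IsPartialBij (f : PMapN) : Prop :=
  ∀ ⦃m n a⦄, f m = some a → f n = some a → m = n

/-- `f` is a partial isometry with respect to the metric `d(m, n) = |m - n|`. -/
def IsIsometry (f : PMapN) : Prop :=
  ∀ ⦃m n a b⦄, f m = some a → f n = some b →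
    |((a : ℕ) : ℤ) - ((b : ℕ) : ℤ)| = |((m : ℕ) : ℤ) - ((n : ℕ) : ℤ)|

/-- Membership in the inverse monoid `𝐈ℕ∞` of partial cofinite isometries of ℕ:
a partial bijection of ℕ with cofinite domain and cofinite range preserving distances. -/
def InIN (f : PMapN) : Prop :=
  IsPartialBij f ∧ (pdom f)ᶜ.Finite ∧ (pran f)ᶜ.Finite ∧ IsIsometry f

open Classical in
/-- The inverse of a partial bijection. -/
noncomputable def pinv (f : PMapN) : PMapN := fun m =>
  if h : ∃ n, f n = some m then some h.choose else none

/-- Membership in the subsemigroup of `𝐈ℕ∞` generated by `γ` and `γ⁻¹`. -/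
inductive GenBy (γ : PMapN) : PMapN → Prop
  | base : GenBy γ γ
  | inv : GenBy γ (pinv γ)
  | mul : ∀ f g, GenBy γ f → GenBy γ g → GenBy γ (pmul f g)

/-- The bicyclic monoid `𝒞(p,q) = ⟨p, q ∣ pq = 1⟩`, realized on `ℕ × ℕ` via the normal
forms `q^i p^j`: `(q^a p^b)(q^c p^d) = q^(a + c - min b c) p^(b + d - min b c)`. -/
def bmul : ℕ × ℕ → ℕ × ℕ → ℕ × ℕ := fun x y =>
  (x.1 + y.1 - min x.2 y.1, x.2 + y.2 - min x.2 y.1)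

open Classical in
/-- Auxiliary family of partial maps: `phiAux D c a b` sends `n` to `n + a*c - b*c`,
defined when `n - b*c` is (a positive number) in `D`. -/
noncomputable def phiAux (D : Set ℕ+) (c a b : ℕ) : PMapN := fun n =>
  if h : ∃ m : ℕ+, m ∈ D ∧ (m:ℕ) + b*c = (n:ℕ) then
    some ⟨(h.choose : ℕ) + a*c, Nat.lt_of_lt_of_le h.choose.2 (Nat.le_add_right _ _)⟩
  else none

lemma phiAux_eq_some {D : Set ℕ+} {c a b : ℕ} {n v : ℕ+} :
    phiAux D c a b n = some v ↔
      ∃ m : ℕ+, m ∈ D ∧ (m:ℕ) + b*c = (n:ℕ) ∧ (v:ℕ) + b*c = (n:ℕ) + a*c := by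
  unfold phiAux
  by_cases h : ∃ m : ℕ+, m ∈ D ∧ (m:ℕ) + b*c = (n:ℕ)
  · rw [dif_pos h]
    obtain ⟨hm, hmn⟩ := h.choose_spec
    constructor
    · intro hv
      have hv' : (h.choose : ℕ) + a*c = (v:ℕ) := by
        rw [← Option.some_inj.mp hv, PNat.mk_coe]
      exact ⟨h.choose, hm, hmn, by omega⟩
    · rintro ⟨m', hm', h1, h2⟩
      have : (h.choose : ℕ) + a*c = (v:ℕ) := by omega
      exact congrArg some (PNat.coe_injective (by rw [PNat.mk_coe, this]))
  · rw [dif_neg h]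
    constructor
    · intro hv; exact absurd hv (by simp)
    · rintro ⟨m', hm', h1, h2⟩
      exact absurd ⟨m', hm', h1⟩ h

lemma phiAux_eq_none {D : Set ℕ+} {c a b : ℕ} {n : ℕ+} :
    phiAux D c a b n = none ↔ ¬ ∃ m : ℕ+, m ∈ D ∧ (m:ℕ) + b*c = (n:ℕ) := by
  unfold phiAux
  by_cases h : ∃ m : ℕ+, m ∈ D ∧ (m:ℕ) + b*c = (n:ℕ)
  · rw [dif_pos h]; simp [h]
  · rw [dif_neg h]; simp [h]

lemma phiAux_mul (D : Set ℕ+) {c : ℕ} (hc : 1 ≤ c) (hbig : ∀ m : ℕ+, c ≤ (m:ℕ) → m ∈ D)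
    (a b a' b' : ℕ) :
    pmul (phiAux D c a b) (phiAux D c a' b') =
      phiAux D c (a + a' - min b a') (b + b' - min b a') := by
  have hstep : ∀ (m : ℕ+) (k : ℕ), m ∈ D → ∀ x : ℕ+, (x:ℕ) = (m:ℕ) + k*c → x ∈ D := by
    intro m k hm x hx
    rcases Nat.eq_zero_or_pos k with hk | hk
    · subst hk
      simp only [Nat.zero_mul, Nat.add_zero] at hx
      rwa [PNat.coe_injective hx]
    · have hkc : c ≤ k * c := Nat.le_mul_of_pos_left c hk
      exact hbig x (by omega)
  funext n
  simp only [pmul]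
  rcases le_or_gt b a' with hba | hba
  · rw [min_eq_left hba]
    have hB : b + b' - b = b' := by omega
    rw [hB]
    rcases hinner : phiAux D c a' b' n with _ | v
    · rw [phiAux_eq_none] at hinner
      rw [Option.bind_none]
      symm
      rw [phiAux_eq_none]
      rintro ⟨M, hM, hMn⟩
      exact hinner ⟨M, hM, hMn⟩
    · rw [phiAux_eq_some] at hinner
      obtain ⟨m', hm', h1, h2⟩ := hinner
      rw [Option.bind_some]
      rcases hLHS : phiAux D c a b v with _ | u
      · rw [phiAux_eq_none] at hLHS
        symm; rw [phiAux_eq_none]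
        rintro ⟨M, hM, hMn⟩
        have hkey : (a' - b)*c + b*c = a'*c := by rw [← Nat.add_mul]; congr 1; omega
        refine hLHS ⟨⟨(M:ℕ) + (a'-b)*c, M.pos.trans_le (Nat.le_add_right _ _)⟩,
          hstep M (a'-b) hM _ (by rw [PNat.mk_coe]), ?_⟩
        rw [PNat.mk_coe]; omega
      · rw [phiAux_eq_some] at hLHS
        obtain ⟨m, hm, h3, h4⟩ := hLHS
        symm; rw [phiAux_eq_some]
        have hkey : (a + a' - b)*c = a*c + a'*c - b*c := by rw [Nat.sub_mul, Nat.add_mul]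
        have hble : b*c ≤ a'*c := Nat.mul_le_mul_right c hba
        exact ⟨m', hm', h1, by omega⟩
  · rw [min_eq_right hba.le]
    have hA : a + a' - a' = a := by omega
    rw [hA]
    have e' : (b + b' - a')*c = b*c + b'*c - a'*c := by rw [Nat.sub_mul, Nat.add_mul]
    have hae : a'*c ≤ b*c := Nat.mul_le_mul_right c hba.le
    rcases hinner : phiAux D c a' b' n with _ | v
    · rw [phiAux_eq_none] at hinner
      rw [Option.bind_none]
      symm; rw [phiAux_eq_none]
      rintro ⟨M, hM, hMn⟩
      have hkey : (b - a')*c + a'*c = b*c := by rw [← Nat.add_mul]; congr 1; omega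
      exact hinner ⟨⟨(M:ℕ)+(b-a')*c, M.pos.trans_le (Nat.le_add_right _ _)⟩,
        hstep M (b-a') hM _ (by rw [PNat.mk_coe]), by rw [PNat.mk_coe]; omega⟩
    · rw [phiAux_eq_some] at hinner
      obtain ⟨m', hm', h1, h2⟩ := hinner
      rw [Option.bind_some]
      rcases hLHS : phiAux D c a b v with _ | u
      · rw [phiAux_eq_none] at hLHS
        symm; rw [phiAux_eq_none]
        rintro ⟨M, hM, hMn⟩
        exact hLHS ⟨M, hM, by omega⟩
      · rw [phiAux_eq_some] at hLHS
        obtain ⟨m, hm, h3, h4⟩ := hLHS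
        symm; rw [phiAux_eq_some]
        exact ⟨m, hm, by omega, by omega⟩

lemma phiAux_apply_shift (D : Set ℕ+) (c a b : ℕ) {d : ℕ+} (hd : d ∈ D) :
    phiAux D c a b ⟨(d:ℕ) + b*c, d.pos.trans_le (Nat.le_add_right _ _)⟩ =
      some ⟨(d:ℕ) + a*c, d.pos.trans_le (Nat.le_add_right _ _)⟩ :=
  phiAux_eq_some.mpr ⟨d, hd, by rw [PNat.mk_coe], by rw [PNat.mk_coe, PNat.mk_coe]; omega⟩

lemma phiAux_inj (D : Set ℕ+) {c : ℕ} (hc : 1 ≤ c) {d : ℕ+} (hd : d ∈ D)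
    (hdmin : ∀ m : ℕ+, m ∈ D → d ≤ m) {a b a' b' : ℕ}
    (h : phiAux D c a b = phiAux D c a' b') : a = a' ∧ b = b' := by
  have key : ∀ x y x' y' : ℕ, phiAux D c x y = phiAux D c x' y' → y' ≤ y := by
    intro x y x' y' hxy
    have h1 := phiAux_apply_shift D c x y hd
    rw [hxy] at h1
    obtain ⟨m, hm, e1, e2⟩ := phiAux_eq_some.mp h1
    rw [PNat.mk_coe] at e1
    by_contra hlt
    have h2 : (y+1)*c ≤ y'*c := Nat.mul_le_mul_right c (by omega)
    have h3 : (y+1)*c = y*c + c := by ring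
    have h4 : (d:ℕ) ≤ (m:ℕ) := (PNat.coe_le_coe d m).mpr (hdmin m hm)
    omega
  have hb : b = b' := le_antisymm (key a' b' a b h.symm) (key a b a' b' h)
  subst hb
  have h1 := phiAux_apply_shift D c a b hd
  rw [h] at h1
  obtain ⟨m, hm, e1, e2⟩ := phiAux_eq_some.mp h1
  rw [PNat.mk_coe] at e1 e2
  rw [PNat.mk_coe] at e2
  have : a * c = a' * c := by omega
  exact ⟨Nat.eq_of_mul_eq_mul_right hc this, rfl⟩

/-- Every idempotent `ε` of `𝐈ℕ∞` is the unit of a subsemigroup of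
`𝐈ℕ∞` isomorphic to the bicyclic semigroup: there is `γ ∈ 𝐈ℕ∞` with `γγ⁻¹ = ε`,
`γ⁻¹γ ≠ ε`, for which `ε` is a two-sided unit of `γ` and `γ⁻¹`, and the subsemigroup
generated by `γ` and `γ⁻¹` is isomorphic to the bicyclic monoid with identity `ε`. -/
theorem stmt19 (ε : PMapN) (hε : InIN ε) (he : pmul ε ε = ε) :
    ∃ γ : PMapN, InIN γ ∧
      pmul γ (pinv γ) = ε ∧ pmul (pinv γ) γ ≠ ε ∧
      pmul ε γ = γ ∧ pmul γ ε = γ ∧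
      pmul ε (pinv γ) = pinv γ ∧ pmul (pinv γ) ε = pinv γ ∧
      ∃ φ : ℕ × ℕ → PMapN, Function.Injective φ ∧ φ (0, 0) = ε ∧
        (∀ x y, φ (bmul x y) = pmul (φ x) (φ y)) ∧
        Set.range φ = {f | GenBy γ f} := by
  classical
  obtain ⟨hinj, hdomf, hranf, hiso⟩ := hε
  set D : Set ℕ+ := pdom ε with hD
  -- ε is the partial identity on its domain D
  have heps : ∀ n : ℕ+, n ∈ D → ε n = some n := by
    intro n hn
    have hn' : ε n ≠ none := hn
    rcases hno : ε n with _ | a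
    · exact absurd hno hn'
    · have h2 : pmul ε ε n = ε n := congrFun he n
      rw [pmul, hno, Option.bind_some] at h2
      exact congrArg some (hinj h2 hno)
  have hepsn : ∀ n : ℕ+, n ∉ D → ε n = none := by
    intro n hn
    by_contra h
    exact hn h
  -- choose the translation constant c
  obtain ⟨N, hN⟩ := (hdomf.image (fun m : ℕ+ => (m:ℕ))).bddAbove
  set c : ℕ := N + 1 with hcdef
  have hc : 1 ≤ c := Nat.le_add_left 1 N
  have hbig : ∀ m : ℕ+, c ≤ (m:ℕ) → m ∈ D := by
    intro m hm
    by_contra hmD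
    have h1 : (m:ℕ) ∈ (fun m : ℕ+ => (m:ℕ)) '' (pdom ε)ᶜ :=
      Set.mem_image_of_mem _ (by simpa [hD] using hmD)
    have := hN h1
    omega
  -- the minimal element of D
  have hne : ∃ k : ℕ, ∃ h : 0 < k, (⟨k, h⟩ : ℕ+) ∈ D :=
    ⟨c, hc, hbig ⟨c, hc⟩ (by simp)⟩
  obtain ⟨hd0pos, hd0⟩ := Nat.find_spec hne
  set d : ℕ+ := ⟨Nat.find hne, hd0pos⟩ with hddef
  have hd : d ∈ D := hd0
  have hdmin : ∀ m : ℕ+, m ∈ D → d ≤ m := by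
    intro m hm
    have hnlt : ¬ ((m:ℕ) < Nat.find hne) := fun hlt =>
      Nat.find_min hne hlt ⟨m.pos, by rwa [show (⟨(m:ℕ), m.pos⟩ : ℕ+) = m from rfl]⟩
    exact (PNat.coe_le_coe d m).mp (Nat.le_of_not_lt hnlt)
  have hmul := phiAux_mul D hc hbig
  -- ε is phiAux D c 0 0
  have heq0 : phiAux D c 0 0 = ε := by
    funext n
    by_cases hn : n ∈ D
    · rw [heps n hn]
      exact phiAux_eq_some.mpr ⟨n, hn, by omega, by omega⟩
    · rw [hepsn n hn]
      refine phiAux_eq_none.mpr ?_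
      rintro ⟨m, hm, hmn⟩
      have hmn' : (m:ℕ) = (n:ℕ) := by omega
      exact hn (PNat.coe_injective hmn' ▸ hm)
  -- the inverse of γ
  have hinv : pinv (phiAux D c 0 1) = phiAux D c 1 0 := by
    funext n
    by_cases hn : n ∈ D
    · have hgam : phiAux D c 0 1 ⟨(n:ℕ) + c, n.pos.trans_le (Nat.le_add_right _ _)⟩ = some n :=
        phiAux_eq_some.mpr ⟨n, hn, by rw [PNat.mk_coe]; omega, by rw [PNat.mk_coe]; omega⟩
      have hex : ∃ k, phiAux D c 0 1 k = some n := ⟨_, hgam⟩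
      simp only [pinv]
      rw [dif_pos hex]
      have hspec := hex.choose_spec
      rw [phiAux_eq_some] at hspec
      obtain ⟨m, hm, e1, e2⟩ := hspec
      symm
      exact phiAux_eq_some.mpr ⟨n, hn, by omega, by omega⟩
    · have hnone : ¬ ∃ k, phiAux D c 0 1 k = some n := by
        rintro ⟨k, hk⟩
        rw [phiAux_eq_some] at hk
        obtain ⟨m, hm, e1, e2⟩ := hk
        have : (m:ℕ) = (n:ℕ) := by omega
        exact hn (PNat.coe_injective this ▸ hm)
      simp only [pinv]
      rw [dif_neg hnone]
      symm
      refine phiAux_eq_none.mpr ?_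
      rintro ⟨m, hm, e⟩
      have : (m:ℕ) = (n:ℕ) := by omega
      exact hn (PNat.coe_injective this ▸ hm)
  refine ⟨phiAux D c 0 1, ?_, ?_, ?_, ?_, ?_, ?_, ?_, ?_⟩
  · -- InIN γ
    refine ⟨?_, ?_, ?_, ?_⟩
    · intro m n a hma hna
      rw [phiAux_eq_some] at hma hna
      obtain ⟨m1, _, e1, e2⟩ := hma
      obtain ⟨m2, _, e3, e4⟩ := hna
      exact PNat.coe_injective (by omega)
    · refine Set.Finite.subset ((Set.finite_Iic (2*c)).preimage
        ((PNat.coe_injective).injOn)) ?_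
      intro n hn
      simp only [pdom, Set.mem_compl_iff, Set.mem_setOf_eq, not_not] at hn
      rw [phiAux_eq_none] at hn
      simp only [Set.mem_preimage, Set.mem_Iic]
      by_contra hgt
      push_neg at hgt
      exact hn ⟨⟨(n:ℕ) - c, by omega⟩, hbig _ (by rw [PNat.mk_coe]; omega),
        by rw [PNat.mk_coe]; omega⟩
    · have hran : pran (phiAux D c 0 1) = D := by
        ext m
        simp only [pran, Set.mem_setOf_eq]
        constructor
        · rintro ⟨k, hk⟩
          rw [phiAux_eq_some] at hk
          obtain ⟨m', hm', e1, e2⟩ := hk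
          have : (m':ℕ) = (m:ℕ) := by omega
          exact PNat.coe_injective this ▸ hm'
        · intro hm
          exact ⟨⟨(m:ℕ)+c, m.pos.trans_le (Nat.le_add_right _ _)⟩,
            phiAux_eq_some.mpr ⟨m, hm, by rw [PNat.mk_coe]; omega, by rw [PNat.mk_coe]; omega⟩⟩
      rw [hran]
      exact hdomf
    · intro m n a b hma hnb
      rw [phiAux_eq_some] at hma hnb
      obtain ⟨m1, _, e1, e2⟩ := hma
      obtain ⟨m2, _, e3, e4⟩ := hnb
      rw [show ((a:ℕ):ℤ) - ((b:ℕ):ℤ) = ((m:ℕ):ℤ) - ((n:ℕ):ℤ) from by omega]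
  · -- γ γ⁻¹ = ε
    rw [hinv, hmul]
    norm_num
    exact heq0
  · -- γ⁻¹ γ ≠ ε
    rw [hinv, hmul]
    norm_num
    intro h
    rw [← heq0] at h
    obtain ⟨h1, h2⟩ := phiAux_inj D hc hd hdmin h
    omega
  · rw [← heq0, hmul]
    norm_num
  · rw [← heq0, hmul]
    norm_num
  · rw [hinv, ← heq0, hmul]
    norm_num
  · rw [hinv, ← heq0, hmul]
    norm_num
  · -- the isomorphism with the bicyclic monoid
    refine ⟨fun p => phiAux D c p.1 p.2, ?_, heq0, ?_, ?_⟩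
    · intro p q h
      obtain ⟨h1, h2⟩ := phiAux_inj D hc hd hdmin h
      exact Prod.ext_iff.mpr ⟨h1, h2⟩
    · intro x y
      exact (hmul x.1 x.2 y.1 y.2).symm
    · have hgen : ∀ A B : ℕ, GenBy (phiAux D c 0 1) (phiAux D c A B) := by
        have hg0 : GenBy (phiAux D c 0 1) (phiAux D c 0 0) := by
          have h1 : phiAux D c 0 0 = pmul (phiAux D c 0 1) (pinv (phiAux D c 0 1)) := by
            rw [hinv, hmul]; norm_num
          rw [h1]
          exact GenBy.mul _ _ GenBy.base GenBy.inv
        have hstepb : ∀ B, GenBy (phiAux D c 0 1) (phiAux D c 0 B) := by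
          intro B
          induction B with
          | zero => exact hg0
          | succ B ih =>
            have h1 : phiAux D c 0 (B+1) = pmul (phiAux D c 0 B) (phiAux D c 0 1) := by
              rw [hmul, show 0 + 0 - min B 0 = 0 from by omega,
                show B + 1 - min B 0 = B + 1 from by omega]
            rw [h1]
            exact GenBy.mul _ _ ih GenBy.base
        intro A B
        induction A with
        | zero => exact hstepb B
        | succ A ih =>
          have h1 : phiAux D c (A+1) B = pmul (pinv (phiAux D c 0 1)) (phiAux D c A B) := by
            rw [hinv, hmul, show 1 + A - min 0 A = A + 1 from by omega,
              show 0 + B - min 0 A = B from by omega]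
          rw [h1]
          exact GenBy.mul _ _ GenBy.inv ih
      ext f
      constructor
      · rintro ⟨⟨A, B⟩, rfl⟩
        exact hgen A B
      · intro hf
        induction hf with
        | base => exact ⟨(0, 1), rfl⟩
        | inv => exact ⟨(1, 0), hinv.symm⟩
        | mul f g _ _ ihf ihg =>
          obtain ⟨x, rfl⟩ := ihf
          obtain ⟨y, rfl⟩ := ihg
          exact ⟨bmul x y, (hmul x.1 x.2 y.1 y.2).symm⟩
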